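/- Let Γ be a group, γ ∈ Γ a virtually unipotent element, and Γ₀ ≤ Γ an abelian subgroup generated by virtually unipotent elements of Γ. Then every element of Γ₀ is virtually unipotent in Γ. In particular, any conjugate of a virtually unipotent element is virtually unipotent. -/

import Mathlib

open Polynomial in
private lemma myPowSubOne {R : Type*} [Ring R] {x : R} (h : IsNilpotent (x - 1)) (k : ℕ) :
    IsNilpotent (x ^ k - 1) := by
  induction k with
  | zero => simp
  | succ k ih =>
    have key : x ^ (k + 1) - 1 = (x ^ k - 1) * x + (x - 1) := by noncomm_ring
    rw [key]
    have c1 : Commute (x ^ k - 1) x := ((Commute.refl x).pow_left k).sub_left (Commute.one_left x)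
    have c2 : Commute ((x ^ k - 1) * x) (x - 1) := by
      have ca : Commute (x ^ k - 1) (x - 1) :=
        (((Commute.refl x).pow_left k).sub_right (Commute.one_right _)).sub_left
          ((Commute.one_left x).sub_right (Commute.one_right 1))
      have cb : Commute x (x - 1) := (Commute.refl x).sub_right (Commute.one_right x)
      exact ca.mul_left cb
    exact c2.isNilpotent_add (c1.isNilpotent_mul_right ih) h

open Polynomial in
private lemma myNilpotentOfRoots {K : Type*} [Field K] [IsAlgClosed K] {n : ℕ}
    (A : Matrix (Fin n) (Fin n) K)
    (h : ∀ μ : K, A.charpoly.IsRoot μ → ∃ m : ℕ, 0 < m ∧ μ ^ m = 1) :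
    ∃ N : ℕ, 0 < N ∧ IsNilpotent (A ^ N - 1) := by
  classical
  set p := A.charpoly with hp
  have hmonic : p.Monic := A.charpoly_monic
  have hsplits : p.Splits := IsAlgClosed.splits p
  have hch : ∀ r : p.roots.toFinset, ∃ m : ℕ, 0 < m ∧ (r : K) ^ m = 1 := fun r =>
    h r (isRoot_of_mem_roots (Multiset.mem_toFinset.mp r.2))
  choose m hm1 hm2 using hch
  set N := ∏ r : p.roots.toFinset, m r with hN
  have hNpos : 0 < N := Finset.prod_pos fun r _ => hm1 r
  refine ⟨N, hNpos, ?_⟩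
  have hroot1 : ∀ r ∈ p.roots, r ^ N = 1 := by
    intro r hr
    have hrm : r ∈ p.roots.toFinset := Multiset.mem_toFinset.mpr hr
    obtain ⟨k, hk⟩ := Finset.dvd_prod_of_mem m (Finset.mem_univ (⟨r, hrm⟩ : p.roots.toFinset))
    rw [hN, hk, pow_mul, hm2 ⟨r, hrm⟩, one_pow]
  have hfact : p = (p.roots.map fun a => X - C a).prod :=
    hsplits.eq_prod_roots_of_monic hmonic
  have hdvd : p ∣ (X ^ N - 1 : K[X]) ^ Multiset.card p.roots := by
    have h1 : (p.roots.map fun a => X - C a).prod ∣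
        (p.roots.map fun _ => (X ^ N - 1 : K[X])).prod := by
      refine Multiset.prod_dvd_prod_of_dvd _ _ fun a ha => ?_
      rw [dvd_iff_isRoot]
      simp [IsRoot, hroot1 a ha]
    rw [Multiset.map_const', Multiset.prod_replicate] at h1
    calc p = (p.roots.map fun a => X - C a).prod := hfact
    _ ∣ _ := h1
  obtain ⟨q, hq⟩ := hdvd
  refine ⟨Multiset.card p.roots, ?_⟩
  have := congrArg (aeval A) hq
  simp only [map_pow, map_mul, map_sub, aeval_X, map_one] at this
  rw [this, hp, Matrix.aeval_self_charpoly, zero_mul]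

open Polynomial in
private lemma myRootPow {K : Type*} [Field K] {n N : ℕ} (A : Matrix (Fin n) (Fin n) K)
    (hN : IsNilpotent (A ^ N - 1)) {μ : K} (hμ : A.charpoly.IsRoot μ) : μ ^ N = 1 := by
  classical
  have heval : ∀ (M : Matrix (Fin n) (Fin n) K) (r : K),
      M.charpoly.eval r = (r • (1 : Matrix (Fin n) (Fin n) K) - M).det := by
    intro M r
    have : M.charpoly.eval r = (evalRingHom r) M.charpoly := rfl
    rw [this, Matrix.charpoly, RingHom.map_det]
    congr 1
    ext i j
    by_cases h : i = j <;>
      simp [Matrix.charmatrix_apply, Matrix.map_apply, Matrix.sub_apply, Matrix.one_apply,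
        Matrix.diagonal_apply, h]
  have hdet : (μ • (1 : Matrix (Fin n) (Fin n) K) - A).det = 0 := by
    rw [← heval]; exact hμ
  have hc : Commute (μ • (1 : Matrix (Fin n) (Fin n) K)) A := (Commute.one_left A).smul_left μ
  obtain ⟨q, hq⟩ := hc.sub_dvd_pow_sub_pow N
  have hdetN : ((μ • (1 : Matrix (Fin n) (Fin n) K)) ^ N - A ^ N).det = 0 := by
    rw [hq, Matrix.det_mul, hdet, zero_mul]
  have hpow : (μ • (1 : Matrix (Fin n) (Fin n) K)) ^ N = μ ^ N • 1 := by
    rw [_root_.smul_pow, one_pow]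
  rw [hpow] at hdetN
  by_contra hne
  set c := μ ^ N - 1 with hcdef
  have hc0 : c ≠ 0 := sub_ne_zero.mpr hne
  have key : μ ^ N • (1 : Matrix (Fin n) (Fin n) K) - A ^ N
      = c • (1 - c⁻¹ • (A ^ N - 1)) := by
    rw [smul_sub, smul_smul, mul_inv_cancel₀ hc0, one_smul, hcdef, sub_smul, one_smul]
    abel
  have hunit : IsUnit (1 - c⁻¹ • (A ^ N - 1)) :=
    (hN.smul c⁻¹).isUnit_one_sub
  have : (μ ^ N • (1 : Matrix (Fin n) (Fin n) K) - A ^ N).det ≠ 0 := by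
    rw [key, Matrix.det_smul]
    exact mul_ne_zero (pow_ne_zero _ hc0)
      (((Matrix.isUnit_iff_isUnit_det _).mp hunit).ne_zero)
  exact this hdetN

open Polynomial in
private lemma myCharpolyConj {R : Type*} [CommRing R] {n : ℕ} (M U V : Matrix (Fin n) (Fin n) R)
    (hUV : U * V = 1) : (U * M * V).charpoly = M.charpoly := by
  have hmapUV : U.map C * V.map C = 1 := by
    rw [← Matrix.map_mul, hUV, Matrix.map_one _ (map_zero C) (map_one C)]
  have key : (U * M * V).charmatrix = U.map C * M.charmatrix * V.map C := by
    unfold Matrix.charmatrix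
    rw [Matrix.mul_sub, Matrix.sub_mul]
    simp only [← RingHom.mapMatrix_apply, ← map_mul]
    congr 1
    calc Matrix.scalar (Fin n) (X : R[X])
        = U.map C * V.map C * Matrix.scalar (Fin n) (X : R[X]) := by rw [hmapUV, one_mul]
      _ = U.map C * (Matrix.scalar (Fin n) (X : R[X]) * V.map C) := by
          rw [mul_assoc]
          congr 1
          exact ((Matrix.scalar_commute (X : R[X]) (fun r' => Commute.all _ _) (V.map C))).symm
      _ = U.map C * Matrix.scalar (Fin n) (X : R[X]) * V.map C := by rw [mul_assoc]
  rw [Matrix.charpoly, key, Matrix.det_mul, Matrix.det_mul, Matrix.charpoly]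
  have h1 : (U.map C).det * (V.map C).det = 1 := by
    rw [← Matrix.det_mul, hmapUV, Matrix.det_one]
  calc (U.map C).det * M.charmatrix.det * (V.map C).det
      = (U.map C).det * (V.map C).det * M.charmatrix.det := by ring
    _ = M.charmatrix.det := by rw [h1, one_mul]

/-- An element `γ` of a group `Γ` is virtually unipotent if every finite-dimensional
linear representation of `Γ` (over any field) sends `γ` to a matrix all of whose
eigenvalues, over the algebraic closure, are roots of unity. -/
def IsVirtuallyUnipotent {Γ : Type*} [Group Γ] (γ : Γ) : Prop :=
  ∀ (F : Type) (_ : Field F) (n : ℕ) (ρ : Γ →* GL (Fin n) F)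
    (μ : AlgebraicClosure F),
    (((ρ γ : Matrix (Fin n) (Fin n) F)).map
      (algebraMap F (AlgebraicClosure F))).charpoly.IsRoot μ →
    ∃ m : ℕ, 0 < m ∧ μ ^ m = 1

/-- If `Γ₀` is an abelian subgroup of `Γ` generated by virtually unipotent elements of
`Γ`, then every element of `Γ₀` is virtually unipotent in `Γ`; in particular, every
conjugate of a virtually unipotent element `γ` is virtually unipotent. -/
theorem virtually_unipotent_of_abelian_generated_and_conjugates
    {Γ : Type*} [Group Γ] (γ : Γ) (hγ : IsVirtuallyUnipotent γ)
    (Γ₀ : Subgroup Γ) (S : Set Γ) (hgen : Γ₀ = Subgroup.closure S)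
    (hS : ∀ g ∈ S, IsVirtuallyUnipotent g)
    (habel : ∀ a ∈ Γ₀, ∀ b ∈ Γ₀, a * b = b * a) :
    (∀ g ∈ Γ₀, IsVirtuallyUnipotent g) ∧
    (∀ δ : Γ, IsVirtuallyUnipotent (δ * γ * δ⁻¹)) := by
  subst hgen
  constructor
  · intro g hg F _F n ρ μ hμ
    letI K := AlgebraicClosure F
    let ψ : Γ →* Matrix (Fin n) (Fin n) K :=
      ((algebraMap F K).mapMatrix.toMonoidHom.comp ((Units.coeHom _).comp ρ))
    have hψ : ∀ x : Γ, ψ x = ((ρ x : Matrix (Fin n) (Fin n) F)).map (algebraMap F K) :=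
      fun _ => rfl
    have hQ : ∀ x, x ∈ Subgroup.closure S → ∃ N : ℕ, 0 < N ∧ IsNilpotent (ψ x ^ N - 1) := by
      intro x hx
      induction hx using Subgroup.closure_induction with
      | mem s hs =>
        apply myNilpotentOfRoots
        intro ν hν
        exact hS s hs F _F n ρ ν hν
      | one => exact ⟨1, one_pos, by simp; exact IsNilpotent.zero⟩
      | mul a b ha hb iha ihb =>
        obtain ⟨N1, hN1, hA⟩ := iha
        obtain ⟨N2, hN2, hB⟩ := ihb
        refine ⟨N1 * N2, Nat.mul_pos hN1 hN2, ?_⟩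
        have hc : Commute (ψ a) (ψ b) := by
          unfold Commute SemiconjBy
          rw [← map_mul, habel a ha b hb, map_mul]
        have hA' : IsNilpotent (ψ a ^ (N1 * N2) - 1) := by
          rw [pow_mul]; exact myPowSubOne hA N2
        have hB' : IsNilpotent (ψ b ^ (N1 * N2) - 1) := by
          rw [mul_comm N1 N2, pow_mul]; exact myPowSubOne hB N1
        set N := N1 * N2
        have hmulpow : ψ (a * b) ^ N = ψ a ^ N * ψ b ^ N := by
          rw [map_mul, hc.mul_pow]
        have key : ψ (a * b) ^ N - 1 = (ψ a ^ N - 1) * ψ b ^ N + (ψ b ^ N - 1) := by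
          rw [hmulpow, sub_mul, one_mul]; abel
        rw [key]
        have cpow : Commute (ψ a ^ N) (ψ b ^ N) := hc.pow_pow N N
        have c1 : Commute ((ψ a ^ N - 1) * ψ b ^ N) (ψ b ^ N - 1) := by
          have ca : Commute (ψ a ^ N - 1) (ψ b ^ N - 1) :=
            (cpow.sub_right (Commute.one_right _)).sub_left
              ((Commute.one_left _).sub_right (Commute.one_right _))
          have cb : Commute (ψ b ^ N) (ψ b ^ N - 1) :=
            (Commute.refl _).sub_right (Commute.one_right _)
          exact ca.mul_left cb
        exact c1.isNilpotent_add
          ((cpow.sub_left (Commute.one_left _)).isNilpotent_mul_right hA') hB'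
      | inv a ha iha =>
        obtain ⟨N, hNpos, hnil⟩ := iha
        refine ⟨N, hNpos, ?_⟩
        have hBA : ψ a⁻¹ * ψ a = 1 := by rw [← map_mul, inv_mul_cancel, map_one]
        have hAB : ψ a * ψ a⁻¹ = 1 := by rw [← map_mul, mul_inv_cancel, map_one]
        have hcomm : Commute (ψ a⁻¹) (ψ a) := by
          unfold Commute SemiconjBy
          rw [hBA, hAB]
        have hBNAN : ψ a⁻¹ ^ N * ψ a ^ N = 1 := by
          rw [← hcomm.mul_pow, hBA, one_pow]
        have key : ψ a⁻¹ ^ N - 1 = -(ψ a⁻¹ ^ N * (ψ a ^ N - 1)) := by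
          rw [mul_sub, mul_one, hBNAN, neg_sub]
        rw [key]
        exact (((hcomm.pow_pow N N).sub_right (Commute.one_right _)).isNilpotent_mul_left
          hnil).neg
    obtain ⟨N, hNpos, hNil⟩ := hQ g hg
    exact ⟨N, hNpos, myRootPow _ hNil hμ⟩
  · intro δ F _F n ρ μ hμ
    letI K := AlgebraicClosure F
    let ψ : Γ →* Matrix (Fin n) (Fin n) K :=
      ((algebraMap F K).mapMatrix.toMonoidHom.comp ((Units.coeHom _).comp ρ))
    have hUV : ψ δ * ψ δ⁻¹ = 1 := by rw [← map_mul, mul_inv_cancel, map_one]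
    have hconj : (ψ δ * ψ γ * ψ δ⁻¹).charpoly = (ψ γ).charpoly :=
      myCharpolyConj _ _ _ hUV
    have hμ' : (ψ (δ * γ * δ⁻¹)).charpoly.IsRoot μ := hμ
    rw [map_mul, map_mul, hconj] at hμ'
    exact hγ F _F n ρ μ hμ'
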